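/- There exist real numbers 0 < c_1, c_2 < 1 with the following property. Let x_1, x_2, x_3, x_4 ∈ ℝ³ be four points, not all equal, let Δ' be their convex hull and let τ be the diameter of Δ', and let [a,b] ⊆ Δ' be a line segment with ‖b − a‖ ≥ c_1·τ. Then there exist indices i ≠ j in {1,2,3,4} with ‖x_i − x_j‖ ≥ ‖b − a‖ and |⟨ b − a, (x_i − x_j)/‖x_i − x_j‖ ⟩| ≥ c_2·‖b − a‖. -/

import Mathlib

open RealInnerProductSpace

/-- There are universal constants `0 < c₁, c₂ < 1` such that: for any four points of
`ℝ³`, not all equal, with convex hull `Δ'` of diameter `τ`, and any segment `[a,b] ⊆ Δ'`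
of length at least `c₁·τ`, some edge of `Δ'` has length at least `‖b - a‖` and the
orthogonal projection of `[a,b]` onto its direction has length at least `c₂·‖b - a‖`. -/
theorem segment_projects_onto_long_edge :
    ∃ c₁ c₂ : ℝ, 0 < c₁ ∧ c₁ < 1 ∧ 0 < c₂ ∧ c₂ < 1 ∧
      ∀ x : Fin 4 → EuclideanSpace ℝ (Fin 3), (∃ i j, x i ≠ x j) →
        ∀ a b : EuclideanSpace ℝ (Fin 3),
          segment ℝ a b ⊆ convexHull ℝ (Set.range x) →
          c₁ * Metric.diam (convexHull ℝ (Set.range x)) ≤ ‖b - a‖ →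
          ∃ i j, i ≠ j ∧ ‖b - a‖ ≤ ‖x i - x j‖ ∧
            c₂ * ‖b - a‖ ≤ |⟪b - a, (‖x i - x j‖)⁻¹ • (x i - x j)⟫| := by
  refine ⟨1/2, 1/2, by norm_num, by norm_num, by norm_num, by norm_num, ?_⟩
  intro x hx a b hseg hlen
  by_cases hab : b = a
  · obtain ⟨i, j, hij⟩ := hx
    refine ⟨i, j, fun h => hij (congrArg x h), ?_, ?_⟩ <;>
      simp [hab, abs_nonneg, norm_nonneg]
  have hba : (0:ℝ) < ‖b - a‖ := by
    simpa [sub_eq_zero] using (norm_pos_iff.2 (sub_ne_zero.2 hab))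
  set v : EuclideanSpace ℝ (Fin 3) := b - a with hv
  -- pick max and min of i ↦ ⟪x i, v⟫
  obtain ⟨i, -, hi⟩ := Finset.exists_max_image (Finset.univ : Finset (Fin 4))
    (fun k => ⟪x k, v⟫) ⟨0, Finset.mem_univ 0⟩
  obtain ⟨j, -, hj⟩ := Finset.exists_min_image (Finset.univ : Finset (Fin 4))
    (fun k => ⟪x k, v⟫) ⟨0, Finset.mem_univ 0⟩
  have hlin : IsLinearMap ℝ (fun y : EuclideanSpace ℝ (Fin 3) => ⟪y, v⟫) :=
    ⟨fun p q => inner_add_left p q v, fun c p => real_inner_smul_left p v c⟩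
  have ha : a ∈ convexHull ℝ (Set.range x) := hseg (left_mem_segment ℝ a b)
  have hb : b ∈ convexHull ℝ (Set.range x) := hseg (right_mem_segment ℝ a b)
  have hbup : ⟪b, v⟫ ≤ ⟪x i, v⟫ := by
    have : convexHull ℝ (Set.range x) ⊆ {y | ⟪y, v⟫ ≤ ⟪x i, v⟫} := by
      apply convexHull_min
      · rintro y ⟨k, rfl⟩; exact hi k (Finset.mem_univ k)
      · exact convex_halfSpace_le hlin _
    exact this hb
  have halow : ⟪x j, v⟫ ≤ ⟪a, v⟫ := by
    have : convexHull ℝ (Set.range x) ⊆ {y | ⟪x j, v⟫ ≤ ⟪y, v⟫} := by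
      apply convexHull_min
      · rintro y ⟨k, rfl⟩; exact hj k (Finset.mem_univ k)
      · exact convex_halfSpace_ge hlin _
    exact this ha
  have key : ‖b - a‖ ^ 2 ≤ ⟪x i - x j, v⟫ := by
    have h1 : ⟪b - a, v⟫ = ‖b - a‖ ^ 2 := by
      rw [hv, real_inner_self_eq_norm_sq]
    have h2 : ⟪b - a, v⟫ = ⟪b, v⟫ - ⟪a, v⟫ := inner_sub_left b a v
    have h3 : ⟪x i - x j, v⟫ = ⟪x i, v⟫ - ⟪x j, v⟫ := inner_sub_left _ _ v
    nlinarith [hbup, halow]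
  have hxij : x i ≠ x j := by
    intro h
    rw [h, sub_self] at key
    simp only [inner_zero_left] at key
    nlinarith
  have hij : i ≠ j := fun h => hxij (congrArg x h)
  set e : EuclideanSpace ℝ (Fin 3) := x i - x j with he
  have hepos : (0:ℝ) < ‖e‖ := norm_pos_iff.2 (sub_ne_zero.2 hxij)
  -- Cauchy-Schwarz
  have hcs : ⟪e, v⟫ ≤ ‖e‖ * ‖v‖ := real_inner_le_norm e v
  have hvnorm : ‖v‖ = ‖b - a‖ := rfl
  have hlong : ‖b - a‖ ≤ ‖e‖ := by nlinarith [key, hcs]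
  -- edge length ≤ diam ≤ 2‖b-a‖
  have hfin : (Set.range x).Finite := Set.finite_range x
  have hcomp : IsCompact (convexHull ℝ (Set.range x)) := hfin.isCompact_convexHull (𝕜 := ℝ)
  have hbd := hcomp.isBounded
  have hxi : x i ∈ convexHull ℝ (Set.range x) := subset_convexHull ℝ _ ⟨i, rfl⟩
  have hxj : x j ∈ convexHull ℝ (Set.range x) := subset_convexHull ℝ _ ⟨j, rfl⟩
  have hediam : ‖e‖ ≤ Metric.diam (convexHull ℝ (Set.range x)) := by
    have := Metric.dist_le_diam_of_mem hbd hxi hxj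
    simpa [he, dist_eq_norm] using this
  have hes : ‖e‖ ≤ 2 * ‖b - a‖ := by nlinarith [hediam, hlen]
  refine ⟨i, j, hij, hlong, ?_⟩
  have hproj : ⟪b - a, (‖e‖)⁻¹ • e⟫ = (‖e‖)⁻¹ * ⟪b - a, e⟫ := real_inner_smul_right _ _ _
  have hsym : ⟪b - a, e⟫ = ⟪e, v⟫ := real_inner_comm _ _
  have hpos : (0:ℝ) < ⟪b - a, e⟫ := by rw [hsym]; nlinarith [key]
  rw [hproj, abs_of_pos (by positivity)]
  rw [inv_mul_eq_div, le_div_iff₀ hepos]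
  nlinarith [key, hes, hsym]
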